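/- Let Γ be the group with presentation ⟨u, v, x, y, z | u(xy⁻¹)u⁻¹ = yz⁻¹, v(xy⁻¹)v⁻¹ = zx⁻¹⟩. Then Γ contains a non-trivial generalised torsion element; namely, the image g of xy⁻¹ in Γ satisfies g ≠ 1 and there exist h₁, h₂, h₃ ∈ Γ with (h₁⁻¹gh₁)(h₂⁻¹gh₂)(h₃⁻¹gh₃) = 1. -/

import Mathlib

/-- The two relators of `Γ = ⟨u,v,x,y,z ∣ u(xy⁻¹)u⁻¹ = yz⁻¹, v(xy⁻¹)v⁻¹ = zx⁻¹⟩`,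
with generators indexed by `Fin 5` as `u = 0`, `v = 1`, `x = 2`, `y = 3`, `z = 4`. -/
def chiswellRels : Set (FreeGroup (Fin 5)) :=
  { FreeGroup.of 0 * (FreeGroup.of 2 * (FreeGroup.of 3)⁻¹) * (FreeGroup.of 0)⁻¹ *
      (FreeGroup.of 3 * (FreeGroup.of 4)⁻¹)⁻¹,
    FreeGroup.of 1 * (FreeGroup.of 2 * (FreeGroup.of 3)⁻¹) * (FreeGroup.of 1)⁻¹ *
      (FreeGroup.of 4 * (FreeGroup.of 2)⁻¹)⁻¹ }

/-- Assignment of generators in `Multiplicative (ZMod 3)` killing both relators. -/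
def chiswellF : Fin 5 → Multiplicative (ZMod 3) :=
  ![1, 1, Multiplicative.ofAdd 1, 1, Multiplicative.ofAdd 2]

lemma chiswellF_kills : ∀ r ∈ chiswellRels, FreeGroup.lift chiswellF r = 1 := by
  intro r hr
  rcases hr with rfl | rfl <;>
    simp [chiswellF, ← ofAdd_neg, ← ofAdd_add] <;> decide

/-- The image `g` of `xy⁻¹` in `Γ` is a non-trivial generalised torsion element:
`g ≠ 1` and some product of three conjugates of `g` is trivial. -/
theorem chiswell_has_nontrivial_generalised_torsion :
    let X : PresentedGroup chiswellRels := PresentedGroup.of 2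
    let Y : PresentedGroup chiswellRels := PresentedGroup.of 3
    let g := X * Y⁻¹
    g ≠ 1 ∧ ∃ h₁ h₂ h₃ : PresentedGroup chiswellRels,
      (h₁⁻¹ * g * h₁) * (h₂⁻¹ * g * h₂) * (h₃⁻¹ * g * h₃) = 1 := by
  intro X Y g
  constructor
  · intro hg
    have h : (PresentedGroup.toGroup chiswellF_kills)
        ((PresentedGroup.of 2 : PresentedGroup chiswellRels) *
          (PresentedGroup.of 3 : PresentedGroup chiswellRels)⁻¹) = 1 := by
      rw [show ((PresentedGroup.of 2 : PresentedGroup chiswellRels) *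
          (PresentedGroup.of 3 : PresentedGroup chiswellRels)⁻¹) = g from rfl, hg, map_one]
    simp only [map_mul, map_inv, PresentedGroup.toGroup.of] at h
    exact absurd h (by decide)
  · set U : PresentedGroup chiswellRels := PresentedGroup.of 0 with hU
    set V : PresentedGroup chiswellRels := PresentedGroup.of 1 with hV
    set Z : PresentedGroup chiswellRels := PresentedGroup.of 4 with hZ
    have h1 : U * (X * Y⁻¹) * U⁻¹ * (Y * Z⁻¹)⁻¹ = 1 := by
      have : (PresentedGroup.mk chiswellRels
          (FreeGroup.of 0 * (FreeGroup.of 2 * (FreeGroup.of 3)⁻¹) * (FreeGroup.of 0)⁻¹ *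
            (FreeGroup.of 3 * (FreeGroup.of 4)⁻¹)⁻¹)) = 1 := by
        apply (QuotientGroup.eq_one_iff _).mpr
        exact Subgroup.subset_normalClosure (Set.mem_insert _ _)
      exact this
    have h2 : V * (X * Y⁻¹) * V⁻¹ * (Z * X⁻¹)⁻¹ = 1 := by
      have : (PresentedGroup.mk chiswellRels
          (FreeGroup.of 1 * (FreeGroup.of 2 * (FreeGroup.of 3)⁻¹) * (FreeGroup.of 1)⁻¹ *
            (FreeGroup.of 4 * (FreeGroup.of 2)⁻¹)⁻¹)) = 1 := by
        apply (QuotientGroup.eq_one_iff _).mpr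
        exact Subgroup.subset_normalClosure (Set.mem_insert_of_mem _ rfl)
      exact this
    refine ⟨1, U⁻¹, V⁻¹, ?_⟩
    have e1 : U * g * U⁻¹ = Y * Z⁻¹ := by
      have := mul_eq_one_iff_eq_inv.mp h1
      simpa [g] using this.trans (inv_inv _)
    have e2 : V * g * V⁻¹ = Z * X⁻¹ := by
      have := mul_eq_one_iff_eq_inv.mp h2
      simpa [g] using this.trans (inv_inv _)
    calc (1⁻¹ * g * 1) * ((U⁻¹)⁻¹ * g * U⁻¹) * ((V⁻¹)⁻¹ * g * V⁻¹)
        = g * (U * g * U⁻¹) * (V * g * V⁻¹) := by group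
      _ = (X * Y⁻¹) * (Y * Z⁻¹) * (Z * X⁻¹) := by rw [e1, e2]
      _ = 1 := by group
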